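/- Let G be a looped simple graph. Define the collection L(G) of transverse cycles: subtransversals of W(G) whose corresponding columns of IAS(G) sum to zero over GF(2). Then L(G) = { σ(X·Ψ(G)) ⊞ σ(N(X)·Φ(G)) : X ⊆ V(G) }, where Φ(G) = {(v,φ) : v∈V(G)}, Ψ(G) consists of (v,ψ) for looped v and (v,χ) for unlooped v, N(X) is the set of vertices adjacent to an odd number of elements of X, · denotes selecting the elements corresponding to a vertex subset, σ is the coordinate-wise reduction to subtransversals, and ⊞ is the GF(2) addition on subtransversals given cell-wise by the rule that two distinct nonempty cell-entries sum to the third element of the cell. In particular, L(G) is a GF(2)-subspace of dimension |V(G)| (when G has no isolated structure forcing degeneracy) parametrized bijectively by subsets X ⊆ V(G). -/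

import Mathlib

/-- The three column types of the matrix `IAS(G) = (I | A | I+A)`. -/
inductive GType : Type
  | phi | chi | psi
  deriving DecidableEq

instance : Fintype GType :=
  ⟨{GType.phi, GType.chi, GType.psi}, fun x => by cases x <;> simp⟩

/-- The column of `IAS(G) = (I | A(G) | I+A(G))` indexed by a ground set element of
`W(G) = V × {φ, χ, ψ}`. -/
def iasCol {V : Type} [DecidableEq V] (A : Matrix V V (ZMod 2)) : V × GType → V → ZMod 2
  | (v, GType.phi) => fun w => if w = v then 1 else 0
  | (v, GType.chi) => fun w => A w v
  | (v, GType.psi) => fun w => (if w = v then 1 else 0) + A w v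

/-- Independence in the binary matroid `M(IAS(G))`: a set of ground elements is independent
iff the corresponding columns of `IAS(G)` are linearly independent over `GF(2)`. -/
def IasIndep {V : Type} [DecidableEq V] (A : Matrix V V (ZMod 2))
    (S : Set (V × GType)) : Prop :=
  LinearIndependent (ZMod 2) (fun p : S => iasCol A p.1)

/-- A circuit of `M(IAS(G))`: a minimal dependent set. -/
def IasCircuit {V : Type} [DecidableEq V] (A : Matrix V V (ZMod 2))
    (C : Set (V × GType)) : Prop :=
  ¬ IasIndep A C ∧ ∀ D : Set (V × GType), D ⊂ C → IasIndep A D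

/-- The rank of a subset of the ground set of `M(IAS(G))`: the `GF(2)`-rank of the
corresponding set of columns of `IAS(G)`. -/
noncomputable def iasRk {V : Type} [Fintype V] [DecidableEq V] (A : Matrix V V (ZMod 2))
    (S : Set (V × GType)) : ℕ :=
  Module.finrank (ZMod 2) (Submodule.span (ZMod 2) (iasCol A '' S))

/-- Given two distinct column types, the third one. -/
def gthird : GType → GType → GType
  | GType.phi, GType.chi => GType.psi
  | GType.chi, GType.phi => GType.psi
  | GType.phi, GType.psi => GType.chi
  | GType.psi, GType.phi => GType.chi
  | GType.chi, GType.psi => GType.phi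
  | GType.psi, GType.chi => GType.phi
  | a, _ => a

/-- The cell-wise `GF(2)`-addition `⊞` on `{∅, φ, χ, ψ}` (the Klein four-group):
`∅` is the identity, each element is its own inverse, and two distinct nonempty
values sum to the third. -/
def oadd : Option GType → Option GType → Option GType
  | none, t => t
  | some a, none => some a
  | some a, some b => if a = b then none else some (gthird a b)

/-- A subtransversal of `W(G)`, encoded as a function assigning to each vertex at most
one column type; its column sum in `IAS(G)`. -/
def cycSum {V : Type} [Fintype V] [DecidableEq V] (A : Matrix V V (ZMod 2))
    (f : V → Option GType) : V → ZMod 2 :=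
  ∑ v : V, (f v).elim 0 (fun ι => iasCol A (v, ι))

/-- The subtransversal `σ(X·Ψ(G)) ⊞ σ(N(X)·Φ(G))`: at a vertex `v`, the `⊞`-sum of the
`Ψ(G)`-entry (`ψ` if `v` is looped, `χ` if not) when `v ∈ X`, and the `φ`-entry when `v`
is adjacent to an odd number of elements of `X`. -/
def transCyc {V : Type} [Fintype V] [DecidableEq V] (A : Matrix V V (ZMod 2))
    (X : Finset V) : V → Option GType := fun v =>
  oadd (if v ∈ X then some (if A v v = 1 then GType.psi else GType.chi) else none)
    (if (∑ x ∈ X.erase v, A v x) = 1 then some GType.phi else none)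

/-- Encode a subtransversal cell value as a pair over `GF(2)`. -/
def enc : Option GType → ZMod 2 × ZMod 2
  | none => (0, 0)
  | some GType.phi => (1, 0)
  | some GType.chi => (0, 1)
  | some GType.psi => (1, 1)

lemma enc_inj : Function.Injective enc := by decide

lemma enc_oadd (s t : Option GType) : enc (oadd s t) = enc s + enc t := by
  revert s t; decide

lemma elim_eq {V : Type} [DecidableEq V] (A : Matrix V V (ZMod 2)) (v w : V)
    (o : Option GType) :
    o.elim (0 : V → ZMod 2) (fun ι => iasCol A (v, ι)) w
      = (enc o).1 * (if w = v then 1 else 0) + (enc o).2 * A w v := by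
  cases o with
  | none => simp [enc]
  | some a => cases a <;> simp [enc, iasCol]

lemma cycSum_apply {V : Type} [Fintype V] [DecidableEq V] (A : Matrix V V (ZMod 2))
    (f : V → Option GType) (w : V) :
    cycSum A f w = (enc (f w)).1 + ∑ v : V, (enc (f v)).2 * A w v := by
  unfold cycSum
  rw [Finset.sum_apply]
  simp only [elim_eq]
  rw [Finset.sum_add_distrib]
  congr 1
  simp only [mul_ite, mul_one, mul_zero]
  rw [Finset.sum_ite_eq Finset.univ w (fun v => (enc (f v)).1)]
  simp

lemma zmod2_add_eq_zero {a b : ZMod 2} : a + b = 0 ↔ a = b := by revert a b; decide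

lemma cycSum_zero_iff {V : Type} [Fintype V] [DecidableEq V] (A : Matrix V V (ZMod 2))
    (f : V → Option GType) :
    cycSum A f = 0 ↔ ∀ w, (enc (f w)).1 = ∑ v : V, (enc (f v)).2 * A w v := by
  constructor
  · intro h w
    have := congrFun h w
    rw [cycSum_apply] at this
    exact zmod2_add_eq_zero.mp this
  · intro h
    funext w
    rw [cycSum_apply, Pi.zero_apply, zmod2_add_eq_zero]
    exact h w

lemma enc_transCyc {V : Type} [Fintype V] [DecidableEq V] (A : Matrix V V (ZMod 2))
    (X : Finset V) (v : V) :
    enc (transCyc A X v) = (∑ x ∈ X, A v x, if v ∈ X then 1 else 0) := by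
  unfold transCyc
  rw [enc_oadd]
  have h2 : ∀ c : ZMod 2, enc (if c = 1 then some GType.phi else none) = (c, 0) := by
    decide
  rw [h2]
  by_cases hv : v ∈ X
  · have h1 : enc (some (if A v v = 1 then GType.psi else GType.chi)) = (A v v, (1 : ZMod 2)) := by
      generalize A v v = c; revert c; decide
    simp only [hv, if_true, h1, Prod.mk_add_mk, add_zero]
    rw [Finset.add_sum_erase _ _ hv]
  · simp only [hv, if_false, Finset.erase_eq_of_notMem hv]
    show enc none + _ = _
    simp [enc]

lemma ite_eq_one {c : ZMod 2} : (if c = 1 then (1 : ZMod 2) else 0) = c := by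
  revert c; decide

lemma ite_eq_mul {c d : ZMod 2} : (if c = 1 then d else 0) = c * d := by
  revert c d; decide

lemma cycSum_transCyc {V : Type} [Fintype V] [DecidableEq V] (A : Matrix V V (ZMod 2))
    (X : Finset V) : cycSum A (transCyc A X) = 0 := by
  rw [cycSum_zero_iff]
  intro w
  simp only [enc_transCyc, ite_mul, one_mul, zero_mul]
  rw [Finset.sum_ite_mem, Finset.univ_inter]

/-- the transverse cycles of `G` (subtransversals whose columns of `IAS(G)`
sum to zero) are exactly the subtransversals `σ(X·Ψ(G)) ⊞ σ(N(X)·Φ(G))` for `X ⊆ V(G)`;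
this parametrization is bijective, and the set of transverse cycles is closed under
`⊞` (a `GF(2)`-subspace). -/
theorem transverse_cycles {V : Type} [Fintype V] [DecidableEq V]
    (A : Matrix V V (ZMod 2)) (hA : A.IsSymm) :
    {f : V → Option GType | cycSum A f = 0} = Set.range (transCyc A) ∧
    Function.Injective (transCyc A) ∧
    (∀ f g : V → Option GType, cycSum A f = 0 → cycSum A g = 0 →
      cycSum A (fun v => oadd (f v) (g v)) = 0) := by
  refine ⟨?_, ?_, ?_⟩
  · ext f
    simp only [Set.mem_setOf_eq, Set.mem_range]
    constructor
    · intro hf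
      rw [cycSum_zero_iff] at hf
      refine ⟨Finset.univ.filter (fun v => (enc (f v)).2 = 1), ?_⟩
      funext v
      apply enc_inj
      rw [enc_transCyc]
      have h2 : (if v ∈ Finset.univ.filter (fun v => (enc (f v)).2 = 1) then (1 : ZMod 2)
          else 0) = (enc (f v)).2 := by
        simp only [Finset.mem_filter, Finset.mem_univ, true_and]
        exact ite_eq_one
      have h1 : (∑ x ∈ Finset.univ.filter (fun v => (enc (f v)).2 = 1), A v x)
          = (enc (f v)).1 := by
        rw [Finset.sum_filter, hf v]
        exact Finset.sum_congr rfl (fun x _ => ite_eq_mul)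
      rw [h1, h2]
    · rintro ⟨X, rfl⟩
      exact cycSum_transCyc A X
  · intro X Y h
    ext v
    have := congrArg enc (congrFun h v)
    rw [enc_transCyc, enc_transCyc] at this
    have h2 := congrArg Prod.snd this
    simp only at h2
    by_cases hX : v ∈ X <;> by_cases hY : v ∈ Y <;> simp_all
  · intro f g hf hg
    rw [cycSum_zero_iff] at hf hg ⊢
    intro w
    simp only [enc_oadd, Prod.fst_add, Prod.snd_add, add_mul]
    rw [Finset.sum_add_distrib, hf w, hg w]
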